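/- Let n ≥ 3, let h be a Hessenberg function on {1,…,n} with I_h abelian, let (a,b) ∈ I_h and T = {a,b}, let ν₁, ν₂ ≥ 1 with ν₁ + ν₂ = n, and let w ∈ D_ν(a,b). Then |inv_h(σ_ν ∘ w)| = deg(T) + #{(i,j) : i > j, i ≤ h(j), i ∉ {a,b}, j ∉ {a,b}, and w(i) < w(j)}, where deg(T) = #{j < b : b ≤ h(j)} + #{j < a : a ≤ h(j)}. -/

import Mathlib

/-- `h` is a Hessenberg function on `{1,…,n}`. -/
def IsHessenberg (n : ℕ) (h : ℕ → ℕ) : Prop :=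
  (∀ i, 1 ≤ i → i ≤ n → i ≤ h i ∧ h i ≤ n) ∧
  (∀ i, 1 ≤ i → i < n → h i ≤ h (i + 1))

/-- The ideal `I_h`. -/
def Ih (n : ℕ) (h : ℕ → ℕ) : Set (ℕ × ℕ) :=
  {p | 1 ≤ p.2 ∧ p.2 < p.1 ∧ p.1 ≤ n ∧ h p.2 < p.1}

/-- `I_h` is abelian. -/
def IhAbelian (n : ℕ) (h : ℕ → ℕ) : Prop :=
  ¬ ∃ i j k, (i, j) ∈ Ih n h ∧ (j, k) ∈ Ih n h

/-- `w` is a permutation of `{1,…,n}` (fixing everything else). -/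
def PermOn (n : ℕ) (w : Equiv.Perm ℕ) : Prop :=
  ∀ i, i ∉ Set.Icc 1 n → w i = i

/-- The condition `w⁻¹(J_ν) ⊆ Φ_h`. -/
def JCond (n : ℕ) (h : ℕ → ℕ) (ν₁ : ℕ) (w : Equiv.Perm ℕ) : Prop :=
  ∀ s, 1 ≤ s → s < n → s ≠ ν₁ →
    w.symm (s + 1) < w.symm s → w.symm s ≤ h (w.symm (s + 1))

/-- The condition `w⁻¹(α_{ν₁}) ∈ I_h`. -/
def ICond (n : ℕ) (h : ℕ → ℕ) (ν₁ : ℕ) (w : Equiv.Perm ℕ) : Prop :=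
  w.symm (ν₁ + 1) < w.symm ν₁ ∧ h (w.symm (ν₁ + 1)) < w.symm ν₁

/-- `w ∈ D_ν`. -/
def memD (n : ℕ) (h : ℕ → ℕ) (ν₁ : ℕ) (w : Equiv.Perm ℕ) : Prop :=
  PermOn n w ∧ JCond n h ν₁ w ∧ ICond n h ν₁ w

/-- `w ∈ D_ν(a,b)`. -/
def memDab (n : ℕ) (h : ℕ → ℕ) (ν₁ a b : ℕ) (w : Equiv.Perm ℕ) : Prop :=
  memD n h ν₁ w ∧ w a = ν₁ ∧ w b = ν₁ + 1

/-- `σ` is the permutation `σ_ν` of `{1,…,n}`. -/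
def IsSigma (n ν₁ : ℕ) (σ : Equiv.Perm ℕ) : Prop :=
  PermOn n σ ∧ σ ν₁ = 1 ∧ σ (ν₁ + 1) = 2 ∧
  ∀ i j, i ∈ Set.Icc 1 n → j ∈ Set.Icc 1 n →
    i ≠ ν₁ → i ≠ ν₁ + 1 → j ≠ ν₁ → j ≠ ν₁ + 1 → i < j → σ i < σ j

/-- `|inv_h(w)|`: the number of pairs `(i,j)` with `i > j`, `w(i) < w(j)`, `i ≤ h(j)`. -/
def invhCard (n : ℕ) (h : ℕ → ℕ) (w : Equiv.Perm ℕ) : ℕ :=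
  (((Finset.Icc 1 n) ×ˢ (Finset.Icc 1 n)).filter
    (fun p => p.2 < p.1 ∧ w p.1 < w p.2 ∧ p.1 ≤ h p.2)).card

/-- `deg(T) = #{j < b : b ≤ h(j)} + #{j < a : a ≤ h(j)}` for `T = {a,b}`. -/
def degPair (n : ℕ) (h : ℕ → ℕ) (a b : ℕ) : ℕ :=
  ((Finset.Ico 1 b).filter (fun j => b ≤ h j)).card +
  ((Finset.Ico 1 a).filter (fun j => a ≤ h j)).card

lemma permOn_maps {n : ℕ} {w : Equiv.Perm ℕ} (hw : PermOn n w) {i : ℕ}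
    (h1 : 1 ≤ i) (h2 : i ≤ n) : 1 ≤ w i ∧ w i ≤ n := by
  by_contra hc
  have h3 : w (w i) = w i := hw _ (by simpa [Set.mem_Icc] using hc)
  have h4 : w i = i := by
    have := congrArg w.symm h3
    simpa using this
  rw [h4] at hc
  exact hc ⟨h1, h2⟩

theorem stmt14 (n : ℕ) (h : ℕ → ℕ) (hn : 3 ≤ n) (hh : IsHessenberg n h)
    (habel : IhAbelian n h) (a b : ℕ) (hIb : (a, b) ∈ Ih n h)
    (ν₁ ν₂ : ℕ) (hν₁ : 1 ≤ ν₁) (hν₂ : 1 ≤ ν₂) (hsum : ν₁ + ν₂ = n)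
    (w : Equiv.Perm ℕ) (hw : memDab n h ν₁ a b w)
    (σ : Equiv.Perm ℕ) (hσ : IsSigma n ν₁ σ) :
    invhCard n h (σ * w) =
      degPair n h a b +
        (((Finset.Icc 1 n) ×ˢ (Finset.Icc 1 n)).filter
          (fun p => p.2 < p.1 ∧ p.1 ≤ h p.2 ∧ p.1 ≠ a ∧ p.1 ≠ b ∧
            p.2 ≠ a ∧ p.2 ≠ b ∧ w p.1 < w p.2)).card := by
  obtain ⟨⟨hwP, _, _⟩, hwa, hwb⟩ := hw
  obtain ⟨hσP, hσ1, hσ2, hσmono⟩ := hσ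
  obtain ⟨hb1, hba, han, hhb⟩ := hIb
  simp only at hb1 hba han hhb
  have ha1 : 1 ≤ a := by omega
  have hb_n : b ≤ n := by omega
  -- key facts
  have wne : ∀ i, i ≠ a → i ≠ b → w i ≠ ν₁ ∧ w i ≠ ν₁ + 1 := by
    intro i hia hib
    constructor
    · exact fun he => hia (w.injective (he.trans hwa.symm))
    · exact fun he => hib (w.injective (he.trans hwb.symm))
  have key3 : ∀ i, 1 ≤ i → i ≤ n → i ≠ a → i ≠ b → 3 ≤ σ (w i) := by
    intro i h1 h2 hia hib
    obtain ⟨hw1, hw2⟩ := permOn_maps hwP h1 h2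
    obtain ⟨hs1, hs2⟩ := permOn_maps hσP hw1 hw2
    obtain ⟨hne1, hne2⟩ := wne i hia hib
    have hs3 : σ (w i) ≠ 1 := fun he => hne1 (σ.injective (he.trans hσ1.symm))
    have hs4 : σ (w i) ≠ 2 := fun he => hne2 (σ.injective (he.trans hσ2.symm))
    omega
  have cmp : ∀ i j, 1 ≤ i → i ≤ n → 1 ≤ j → j ≤ n → i ≠ a → i ≠ b → j ≠ a → j ≠ b →
      (σ (w i) < σ (w j) ↔ w i < w j) := by
    intro i j hi1 hi2 hj1 hj2 hia hib hja hjb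
    obtain ⟨hwi1, hwi2⟩ := permOn_maps hwP hi1 hi2
    obtain ⟨hwj1, hwj2⟩ := permOn_maps hwP hj1 hj2
    obtain ⟨hni1, hni2⟩ := wne i hia hib
    obtain ⟨hnj1, hnj2⟩ := wne j hja hjb
    constructor
    · intro hlt
      rcases lt_trichotomy (w i) (w j) with hc | hc | hc
      · exact hc
      · rw [hc] at hlt; omega
      · have := hσmono (w j) (w i) (Set.mem_Icc.mpr ⟨hwj1, hwj2⟩)
          (Set.mem_Icc.mpr ⟨hwi1, hwi2⟩) hnj1 hnj2 hni1 hni2 hc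
        omega
    · intro hlt
      exact hσmono (w i) (w j) (Set.mem_Icc.mpr ⟨hwi1, hwi2⟩)
        (Set.mem_Icc.mpr ⟨hwj1, hwj2⟩) hni1 hni2 hnj1 hnj2 hlt
  classical
  set S1 : Finset (ℕ × ℕ) :=
    ((Finset.Ico 1 a).filter (fun j => a ≤ h j)).image (fun j => (a, j)) with hS1
  set S2 : Finset (ℕ × ℕ) :=
    ((Finset.Ico 1 b).filter (fun j => b ≤ h j)).image (fun j => (b, j)) with hS2
  set S3 : Finset (ℕ × ℕ) :=
    (((Finset.Icc 1 n) ×ˢ (Finset.Icc 1 n)).filter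
      (fun p => p.2 < p.1 ∧ p.1 ≤ h p.2 ∧ p.1 ≠ a ∧ p.1 ≠ b ∧
        p.2 ≠ a ∧ p.2 ≠ b ∧ w p.1 < w p.2)) with hS3
  have hset : (((Finset.Icc 1 n) ×ˢ (Finset.Icc 1 n)).filter
      (fun p => p.2 < p.1 ∧ (σ * w) p.1 < (σ * w) p.2 ∧ p.1 ≤ h p.2)) = S1 ∪ S2 ∪ S3 := by
    ext ⟨i, j⟩
    rw [Finset.mem_filter]
    simp only [hS1, hS2, hS3, Finset.mem_filter, Finset.mem_product, Finset.mem_Icc,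
      Finset.mem_union, Finset.mem_image, Finset.mem_Ico, Equiv.Perm.mul_apply,
      Prod.mk.injEq]
    constructor
    · rintro ⟨⟨⟨hi1, hi2⟩, hj1, hj2⟩, hji, hlt, hih⟩
      by_cases hia : i = a
      · subst hia
        exact Or.inl (Or.inl ⟨j, ⟨⟨hj1, hji⟩, hih⟩, rfl, rfl⟩)
      · by_cases hib : i = b
        · subst hib
          exact Or.inl (Or.inr ⟨j, ⟨⟨hj1, hji⟩, hih⟩, rfl, rfl⟩)
        · have hja : j ≠ a := by
            intro he; subst he
            rw [hwa, hσ1] at hlt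
            have := key3 i hi1 hi2 hia hib
            omega
          have hjb : j ≠ b := by
            intro he; subst he
            rw [hwb, hσ2] at hlt
            have hge := (permOn_maps hσP (permOn_maps hwP hi1 hi2).1
              (permOn_maps hwP hi1 hi2).2).1
            have heq : σ (w i) = 1 := by omega
            exact hia (w.injective ((σ.injective (heq.trans hσ1.symm)).trans hwa.symm))
          exact Or.inr ⟨⟨⟨hi1, hi2⟩, hj1, hj2⟩, hji, hih, hia, hib, hja, hjb,
            (cmp i j hi1 hi2 hj1 hj2 hia hib hja hjb).mp hlt⟩
    · rintro ((⟨x, ⟨⟨hx1, hx2⟩, hxh⟩, hxi, hxj⟩ | ⟨x, ⟨⟨hx1, hx2⟩, hxh⟩, hxi, hxj⟩) |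
        ⟨⟨⟨hi1, hi2⟩, hj1, hj2⟩, hji, hih, hia, hib, hja, hjb, hlt⟩)
      · subst hxi; subst hxj
        have hxa : x ≠ a := by omega
        have hxb : x ≠ b := by intro he; subst he; omega
        have h3 := key3 x hx1 (by omega) hxa hxb
        refine ⟨⟨⟨ha1, han⟩, hx1, by omega⟩, hx2, ?_, hxh⟩
        rw [hwa, hσ1]; omega
      · subst hxi; subst hxj
        have hxa : x ≠ a := by omega
        have hxb : x ≠ b := by omega
        have h3 := key3 x hx1 (by omega) hxa hxb
        refine ⟨⟨⟨hb1, hb_n⟩, hx1, by omega⟩, hx2, ?_, hxh⟩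
        rw [hwb, hσ2]; omega
      · exact ⟨⟨⟨hi1, hi2⟩, hj1, hj2⟩, hji,
          (cmp i j hi1 hi2 hj1 hj2 hia hib hja hjb).mpr hlt, hih⟩
  have hinj : ∀ c : ℕ, Function.Injective (fun j : ℕ => (c, j)) := by
    intro c x y hxy
    simpa using hxy
  have hc1 : S1.card = ((Finset.Ico 1 a).filter (fun j => a ≤ h j)).card :=
    Finset.card_image_of_injective _ (hinj a)
  have hc2 : S2.card = ((Finset.Ico 1 b).filter (fun j => b ≤ h j)).card :=
    Finset.card_image_of_injective _ (hinj b)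
  have hd12 : Disjoint S1 S2 := by
    rw [Finset.disjoint_left]
    rintro ⟨i, j⟩ h1 h2
    simp only [hS1, hS2, Finset.mem_image, Prod.mk.injEq] at h1 h2
    obtain ⟨x, _, hx, _⟩ := h1
    obtain ⟨y, _, hy, _⟩ := h2
    omega
  have hd3 : Disjoint (S1 ∪ S2) S3 := by
    rw [Finset.disjoint_left]
    rintro ⟨i, j⟩ h1 h2
    simp only [hS1, hS2, Finset.mem_union, Finset.mem_image, Prod.mk.injEq] at h1
    simp only [hS3, Finset.mem_filter] at h2
    obtain ⟨_, _, _, hia, hib, _⟩ := h2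
    rcases h1 with ⟨x, _, hx, _⟩ | ⟨x, _, hx, _⟩
    · exact hia hx.symm
    · exact hib hx.symm
  rw [invhCard, hset, Finset.card_union_of_disjoint hd3,
    Finset.card_union_of_disjoint hd12, hc1, hc2, degPair]
  omega
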